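/- arXiv:0704.1859 — 2 statements merged into one kernel-verified Lean document; each statement's English description precedes it below -/
import Mathlib

section
/- Let f_n ≥ 0 for n ∈ ℕ and let f = Σ_{n=0}^∞ f_n χ_n be the corresponding radial function on the free group F. Then the following are equivalent: (i) there exists a constant C such that ⟨f ∗ χ_E, χ_{F′}⟩ ≤ C · |E|^{1/2} · |F′|^{1/2} for all finite subsets E, F′ ⊆ F (i.e. λ(f) is of restricted weak type (2,2)); (ii) Σ_{n=0}^∞ f_n q^{n/2} < ∞ (i.e. f belongs to the Lorentz space L^{(2,1)} of F with counting measure). -/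
open scoped ENNReal

noncomputable section

/-- Word length on the free group: the number of letters of the reduced word. -/
def wlen {α : Type*} [DecidableEq α] (x : FreeGroup α) : ℕ := x.toWord.length

/-- Convolution of `ℝ≥0∞`-valued functions on a group:
`(f ∗ g)(x) = Σ_y f(y) g(y⁻¹ x)`. -/
def conv {G : Type*} [Group G] (f g : G → ℝ≥0∞) (x : G) : ℝ≥0∞ :=
  ∑' y, f y * g (y⁻¹ * x)

/-- Indicator function (ℝ≥0∞-valued) of a finite set. -/
def finInd {G : Type*} [DecidableEq G] (E : Finset G) (x : G) : ℝ≥0∞ :=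
  if x ∈ E then 1 else 0

namespace RWT
open FreeGroup

set_option linter.unusedSectionVars false

variable {α : Type*} [DecidableEq α]

/-- The "inverse letter". -/
def flipL (x : α × Bool) : α × Bool := (x.1, !x.2)

lemma flipL_flipL (x : α × Bool) : flipL (flipL x) = x := by
  cases x with | mk a b => simp [flipL]

lemma flipL_inj : Function.Injective (flipL (α := α)) :=
  Function.Involutive.injective flipL_flipL

lemma cancel_iff (x hd : α × Bool) : (x.1 = hd.1 ∧ x.2 = !hd.2) ↔ hd = flipL x := by
  cases x with | mk a b => cases hd with | mk c d =>
  simp only [flipL, Prod.mk.injEq]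
  constructor
  · rintro ⟨h1, h2⟩; subst h1; exact ⟨rfl, by cases d <;> simp_all⟩
  · rintro ⟨h1, h2⟩; subst h2; exact ⟨h1.symm, by simp⟩

/-- A word is reduced iff no adjacent cancelling pair. -/
def Reduced (w : List (α × Bool)) : Prop := List.Chain' (fun a b => b ≠ flipL a) w

lemma Reduced.nil : Reduced ([] : List (α × Bool)) := List.isChain_nil

lemma Reduced.infix {w w' : List (α × Bool)} (h : Reduced w) (hs : w' <:+: w) :
    Reduced w' := List.IsChain.infix h hs

lemma reduced_reduce (w : List (α × Bool)) : Reduced (reduce w) := by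
  induction w with
  | nil => exact Reduced.nil
  | cons x t ih =>
    rw [reduce.cons]
    rcases h : reduce t with _ | ⟨hd, tl⟩
    · exact List.isChain_singleton x
    · rw [h] at ih
      by_cases hc : x.1 = hd.1 ∧ x.2 = !hd.2
      · simp only [hc, if_true]
        exact ih.infix ((tl.suffix_cons hd).isInfix)
      · simp only [hc, if_false]
        refine List.isChain_cons_cons.2 ⟨fun he => hc ((cancel_iff x hd).2 he), ih⟩

lemma reduce_eq_self_of_reduced {w : List (α × Bool)} (h : Reduced w) : reduce w = w := by
  induction w with
  | nil => rfl
  | cons x t ih =>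
    have ht : Reduced t := h.infix ((t.suffix_cons x).isInfix)
    rw [reduce.cons, ih ht]
    cases t with
    | nil => rfl
    | cons hd tl =>
      have hx : hd ≠ flipL x := (List.isChain_cons_cons.1 h).1
      have hc : ¬(x.1 = hd.1 ∧ x.2 = !hd.2) := fun hh => hx ((cancel_iff x hd).1 hh)
      simp [hc]

lemma reduced_toWord (x : FreeGroup α) : Reduced x.toWord := by
  have := reduce_toWord x
  rw [← this]; exact reduced_reduce _

lemma toWord_mk_reduced {w : List (α × Bool)} (h : Reduced w) :
    (FreeGroup.mk w).toWord = w := by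
  rw [toWord_mk, reduce_eq_self_of_reduced h]

lemma invRev_append (u v : List (α × Bool)) :
    invRev (u ++ v) = invRev v ++ invRev u := by
  simp [invRev]

lemma invRev_cons (a : α × Bool) (u : List (α × Bool)) :
    invRev (a :: u) = invRev u ++ [flipL a] := by
  simp [invRev, flipL]

lemma invRev_concat (a : α × Bool) (u : List (α × Bool)) :
    invRev (u ++ [a]) = flipL a :: invRev u := by
  simp [invRev, flipL]

lemma reduced_invRev {w : List (α × Bool)} (h : Reduced w) : Reduced (invRev w) := by
  rw [Reduced, invRev, show @List.Chain' = @List.IsChain from rfl, List.isChain_reverse]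
  rw [List.isChain_map]
  exact h.imp (fun a b hab he => hab (by cases a; cases b; simp_all [flipL, flip]))

end RWT

namespace Part2
open RWT FreeGroup List

variable {α : Type*} [DecidableEq α]

lemma reduced_append {u v : List (α × Bool)} (hu : Reduced u) (hv : Reduced v)
    (hj : ∀ x ∈ u.getLast?, ∀ y ∈ v.head?, y ≠ flipL x) : Reduced (u ++ v) :=
  List.isChain_append.2 ⟨hu, hv, hj⟩

lemma exists_cancellation (u : List (α × Bool)) : ∀ (v : List (α × Bool)),
    Reduced u → Reduced v →
    ∃ u₁ c v₁, u = u₁ ++ c ∧ v = invRev c ++ v₁ ∧ reduce (u ++ v) = u₁ ++ v₁ := by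
  induction u using List.reverseRecOn with
  | nil =>
    intro v _ hv
    exact ⟨[], [], v, rfl, rfl, by simpa using reduce_eq_self_of_reduced hv⟩
  | append_singleton us la ih =>
    intro v hu hv
    rcases v with _ | ⟨hb, vt⟩
    · exact ⟨us ++ [la], [], [], by simp, rfl, by
        simpa using reduce_eq_self_of_reduced hu⟩
    · by_cases hc : hb = flipL la
      · subst hc
        have hus : Reduced us := hu.infix (List.prefix_append us [la]).isInfix
        have hvt : Reduced vt := hv.infix ((vt.suffix_cons _).isInfix)
        obtain ⟨u₁, c', v₁, h1, h2, h3⟩ := ih vt hus hvt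
        refine ⟨u₁, c' ++ [la], v₁, by rw [h1, List.append_assoc], ?_, ?_⟩
        · rw [invRev_concat, h2]; rfl
        · have hstep : Red.Step (us ++ la :: flipL la :: vt) (us ++ vt) := by
            cases la with | mk xx bb => exact Red.Step.not
          have : us ++ [la] ++ flipL la :: vt = us ++ la :: flipL la :: vt := by
            simp
          rw [this, reduce.Step.eq hstep, h3]
      · refine ⟨us ++ [la], [], hb :: vt, by simp, rfl, ?_⟩
        have : Reduced ((us ++ [la]) ++ hb :: vt) := by
          refine reduced_append hu hv ?_
          intro x hx y hy
          rw [List.getLast?_concat] at hx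
          simp at hx hy
          subst hx; subst hy; exact hc
        simpa using reduce_eq_self_of_reduced this

lemma exists_splitting (x e : FreeGroup α) :
    ∃ U W T : List (α × Bool), x.toWord = U ++ T ∧ e.toWord = W ++ T ∧
      (x * e⁻¹).toWord = U ++ invRev W := by
  obtain ⟨u₁, c, v₁, h1, h2, h3⟩ := exists_cancellation x.toWord (e⁻¹).toWord
    (reduced_toWord x) (reduced_toWord (e⁻¹))
  refine ⟨u₁, invRev v₁, c, h1, ?_, ?_⟩
  · rw [toWord_inv] at h2
    have := congrArg invRev h2
    rw [invRev_invRev, invRev_append, invRev_invRev] at this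
    exact this
  · rw [invRev_invRev]
    have hx : x * e⁻¹ = mk (x.toWord ++ (e⁻¹).toWord) := by
      rw [← mul_mk, mk_toWord, mk_toWord]
    rw [hx, toWord_mk, h3]

end Part2

namespace Part3
open RWT Part2 FreeGroup List
set_option linter.unusedSectionVars false

variable {α : Type*} [DecidableEq α] [Fintype α]

/-- Finset of reduced words of length `t` whose first letter lies in `A`. -/
def Wf : ℕ → Finset (α × Bool) → Finset (List (α × Bool))
  | 0, _ => {[]}
  | (t+1), A => A.biUnion fun a => ((Wf t) (Finset.univ \ {flipL a})).image (a :: ·)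

lemma mem_Wf {t : ℕ} {A : Finset (α × Bool)} {w : List (α × Bool)} (h : w ∈ Wf t A) :
    Reduced w ∧ w.length = t ∧ ∀ y ∈ w.head?, y ∈ A := by
  induction t generalizing A w with
  | zero =>
    simp only [Wf, Finset.mem_singleton] at h
    subst h; exact ⟨Reduced.nil, rfl, by simp⟩
  | succ t ih =>
    simp only [Wf, Finset.mem_biUnion, Finset.mem_image] at h
    obtain ⟨a, ha, w', hw', rfl⟩ := h
    obtain ⟨hred, hlen, hhead⟩ := ih hw'
    refine ⟨?_, by simp [hlen], by simp [ha]⟩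
    rcases w' with _ | ⟨b, w''⟩
    · exact List.isChain_singleton a
    · refine List.isChain_cons_cons.2 ⟨?_, hred⟩
      have := hhead b (by simp)
      simp only [Finset.mem_sdiff, Finset.mem_univ, Finset.mem_singleton, true_and] at this
      exact this

lemma mem_Wf_of {t : ℕ} {A : Finset (α × Bool)} {w : List (α × Bool)}
    (hred : Reduced w) (hlen : w.length = t) (hhead : ∀ y ∈ w.head?, y ∈ A) :
    w ∈ Wf t A := by
  induction t generalizing A w with
  | zero =>
    rw [List.length_eq_zero_iff] at hlen
    subst hlen; simp [Wf]
  | succ t ih =>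
    rcases w with _ | ⟨a, w'⟩
    · simp at hlen
    · simp only [Wf, Finset.mem_biUnion, Finset.mem_image]
      refine ⟨a, hhead a (by simp), w', ?_, rfl⟩
      refine ih (hred.infix ((w'.suffix_cons a).isInfix)) (by simpa using hlen) ?_
      intro y hy
      rcases w' with _ | ⟨b, w''⟩
      · simp at hy
      · simp at hy
        subst hy
        simp only [Finset.mem_sdiff, Finset.mem_univ, Finset.mem_singleton, true_and]
        exact (List.isChain_cons_cons.1 hred).1

lemma card_letters_sub_one (a : α × Bool) :
    (Finset.univ \ {a} : Finset (α × Bool)).card = 2 * Fintype.card α - 1 := by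
  rw [Finset.card_sdiff_of_subset (by simp)]
  simp [Fintype.card_prod, mul_comm]

lemma card_Wf_succ (t : ℕ) (A : Finset (α × Bool)) :
    (Wf (t+1) A).card = A.card * (2 * Fintype.card α - 1)^t := by
  induction t generalizing A with
  | zero =>
    rw [Wf, Finset.card_biUnion, pow_zero, mul_one]
    · simp [Wf]
    · intro a _ b _ hab
      simp only [Finset.disjoint_left, Finset.mem_image]
      rintro w ⟨w1, _, rfl⟩ ⟨w2, _, h⟩
      exact hab (by injection h.symm)
  | succ t ih =>
    rw [Wf, Finset.card_biUnion]
    · have : ∀ a ∈ A, (((Wf (t+1)) (Finset.univ \ {flipL a})).image (a :: ·)).card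
          = (2 * Fintype.card α - 1)^(t+1) := by
        intro a _
        rw [Finset.card_image_of_injective _ (fun x y h => by injection h), ih,
          card_letters_sub_one, pow_succ, mul_comm]
      rw [Finset.sum_congr rfl this, Finset.sum_const, smul_eq_mul]
    · intro a _ b _ hab
      simp only [Finset.disjoint_left, Finset.mem_image]
      rintro w ⟨w1, _, rfl⟩ ⟨w2, _, h⟩
      exact hab (by injection h.symm)

lemma card_Wf_zero (A : Finset (α × Bool)) : (Wf 0 A).card = 1 := by simp [Wf]

end Part3



namespace Part4
open RWT Part2 Part3 FreeGroup List
set_option linter.unusedSectionVars false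

variable {α : Type*} [DecidableEq α] [Fintype α]

lemma split_eq {x e : FreeGroup α} {n ℓ : ℕ} (hn : wlen (x * e⁻¹) = n)
    (hl : wlen e + n = wlen x + 2 * ℓ) :
    ℓ ≤ n ∧ ℓ ≤ wlen e ∧ n - ℓ ≤ wlen x ∧
    x.toWord = x.toWord.take (n - ℓ) ++ e.toWord.drop ℓ ∧
    e.toWord = e.toWord.take ℓ ++ x.toWord.drop (n - ℓ) := by
  obtain ⟨U, W, T, hx, he, hm⟩ := exists_splitting x e
  have h1 : wlen x = U.length + T.length := by rw [wlen, hx, List.length_append]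
  have h2 : wlen e = W.length + T.length := by rw [wlen, he, List.length_append]
  have h3 : n = U.length + W.length := by
    rw [← hn, wlen, hm, List.length_append, invRev_length]
  have hWl : W.length = ℓ := by omega
  have hUl : U.length = n - ℓ := by omega
  have htakex : x.toWord.take (n - ℓ) = U := by rw [hx, ← hUl, List.take_left]
  have hdropx : x.toWord.drop (n - ℓ) = T := by rw [hx, ← hUl, List.drop_left]
  have htakee : e.toWord.take ℓ = W := by rw [he, ← hWl, List.take_left]
  have hdrope : e.toWord.drop ℓ = T := by rw [he, ← hWl, List.drop_left]
  refine ⟨by omega, by omega, by omega, ?_, ?_⟩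
  · rw [htakex, hdrope]; exact hx
  · rw [htakee, hdropx]; exact he

/-- Pairs `(x,e) ∈ F' × E` with `wlen (x e⁻¹) = n`. -/
def Pn (E F' : Finset (FreeGroup α)) (n : ℕ) : Finset (FreeGroup α × FreeGroup α) :=
  (F' ×ˢ E).filter (fun p => wlen (p.1 * p.2⁻¹) = n)

def Pnl (E F' : Finset (FreeGroup α)) (n ℓ : ℕ) : Finset (FreeGroup α × FreeGroup α) :=
  (Pn E F' n).filter (fun p => wlen p.2 + n = wlen p.1 + 2 * ℓ)

lemma take_mem_Wf (x : FreeGroup α) {t : ℕ} (ht : t ≤ wlen x) :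
    x.toWord.take t ∈ Wf t (Finset.univ : Finset (α × Bool)) := by
  refine mem_Wf_of ((reduced_toWord x).infix (x.toWord.take_prefix t).isInfix) ?_ (by simp)
  rw [wlen] at ht
  rw [List.length_take]
  omega

lemma mem_Pn_iff {E F' : Finset (FreeGroup α)} {n : ℕ} {p : FreeGroup α × FreeGroup α} :
    p ∈ Pn E F' n ↔ (p.1 ∈ F' ∧ p.2 ∈ E) ∧ wlen (p.1 * p.2⁻¹) = n := by
  rw [Pn, Finset.mem_filter, Finset.mem_product]

lemma mem_Pnl_iff {E F' : Finset (FreeGroup α)} {n ℓ : ℕ} {p : FreeGroup α × FreeGroup α} :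
    p ∈ Pnl E F' n ℓ ↔ ((p.1 ∈ F' ∧ p.2 ∈ E) ∧ wlen (p.1 * p.2⁻¹) = n)
      ∧ wlen p.2 + n = wlen p.1 + 2 * ℓ := by
  rw [Pnl, Finset.mem_filter, mem_Pn_iff]

lemma card_Pnl_le_left (E F' : Finset (FreeGroup α)) (n ℓ : ℕ) :
    (Pnl E F' n ℓ).card ≤ F'.card * (Wf ℓ (Finset.univ : Finset (α × Bool))).card := by
  rw [← Finset.card_product]
  refine Finset.card_le_card_of_injOn (fun p => (p.1, p.2.toWord.take ℓ)) ?_ ?_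
  · intro p hp
    obtain ⟨⟨⟨h1, h2⟩, hn⟩, hl⟩ := mem_Pnl_iff.1 hp
    obtain ⟨_, hle, _, _, _⟩ := split_eq hn hl
    exact Finset.mem_product.2 ⟨h1, take_mem_Wf _ hle⟩
  · intro p hp q hq heq
    obtain ⟨⟨⟨hp1, hp2⟩, hpn⟩, hpl⟩ := mem_Pnl_iff.1 hp
    obtain ⟨⟨⟨hq1, hq2⟩, hqn⟩, hql⟩ := mem_Pnl_iff.1 hq
    obtain ⟨_, _, _, _, hpe⟩ := split_eq hpn hpl
    obtain ⟨_, _, _, _, hqe⟩ := split_eq hqn hql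
    simp only [Prod.mk.injEq] at heq
    obtain ⟨e1, e2⟩ := heq
    have : p.2.toWord = q.2.toWord := by rw [hpe, hqe, e1, e2]
    exact Prod.ext e1 (toWord_injective this)

lemma card_Pnl_le_right (E F' : Finset (FreeGroup α)) (n ℓ : ℕ) :
    (Pnl E F' n ℓ).card ≤ E.card * (Wf (n - ℓ) (Finset.univ : Finset (α × Bool))).card := by
  rw [← Finset.card_product]
  refine Finset.card_le_card_of_injOn (fun p => (p.2, p.1.toWord.take (n - ℓ))) ?_ ?_
  · intro p hp
    obtain ⟨⟨⟨h1, h2⟩, hn⟩, hl⟩ := mem_Pnl_iff.1 hp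
    obtain ⟨_, _, hle, _, _⟩ := split_eq hn hl
    exact Finset.mem_product.2 ⟨h2, take_mem_Wf _ hle⟩
  · intro p hp q hq heq
    obtain ⟨⟨⟨hp1, hp2⟩, hpn⟩, hpl⟩ := mem_Pnl_iff.1 hp
    obtain ⟨⟨⟨hq1, hq2⟩, hqn⟩, hql⟩ := mem_Pnl_iff.1 hq
    obtain ⟨_, _, _, hpe, _⟩ := split_eq hpn hpl
    obtain ⟨_, _, _, hqe, _⟩ := split_eq hqn hql
    simp only [Prod.mk.injEq] at heq
    obtain ⟨e1, e2⟩ := heq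
    have : p.1.toWord = q.1.toWord := by rw [hpe, hqe, e1, e2]
    exact Prod.ext (toWord_injective this) e1

lemma card_Pn_le_sum (E F' : Finset (FreeGroup α)) (n : ℕ) :
    (Pn E F' n).card ≤ ∑ ℓ ∈ Finset.range (n + 1), (Pnl E F' n ℓ).card := by
  refine le_trans (Finset.card_le_card ?_) (Finset.card_biUnion_le)
  intro p hp
  obtain ⟨hmem, hn⟩ := mem_Pn_iff.1 hp
  obtain ⟨U, W, T, hx, he, hm⟩ := exists_splitting p.1 p.2
  have h1 : wlen p.1 = U.length + T.length := by rw [wlen, hx, List.length_append]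
  have h2 : wlen p.2 = W.length + T.length := by rw [wlen, he, List.length_append]
  have h3 : n = U.length + W.length := by
    rw [← hn, wlen, hm, List.length_append, invRev_length]
  refine Finset.mem_biUnion.2 ⟨W.length, Finset.mem_range.2 (by omega), ?_⟩
  exact mem_Pnl_iff.2 ⟨⟨hmem, hn⟩, by omega⟩

lemma geom_le {q : ℕ} (hq : 2 ≤ q) (n : ℕ) :
    ∑ ℓ ∈ Finset.range (n + 1), q ^ ℓ ≤ 2 * q ^ n := by
  induction n with
  | zero => simp
  | succ n ih =>
    rw [Finset.sum_range_succ]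
    have h1 : 2 * q ^ n ≤ q ^ (n + 1) := by
      rw [pow_succ]
      linarith [Nat.mul_le_mul_left (q ^ n) hq]
    omega

lemma geom_le' {q : ℕ} (hq : 2 ≤ q) {s n : ℕ} (hsn : s ≤ n) :
    ∑ ℓ ∈ Finset.Ico s (n + 1), q ^ (n - ℓ) ≤ 2 * q ^ (n - s) := by
  have heq : (∑ ℓ ∈ Finset.Ico s (n + 1), q ^ (n - ℓ))
      = ∑ k ∈ Finset.range (n - s + 1), q ^ k := by
    refine Finset.sum_nbij' (fun ℓ => n - ℓ) (fun k => n - k) ?_ ?_ ?_ ?_ ?_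
    · intro ℓ hℓ
      simp only [Finset.mem_Ico] at hℓ
      simp only [Finset.mem_range]
      omega
    · intro k hk
      simp only [Finset.mem_range] at hk
      simp only [Finset.mem_Ico]
      omega
    · intro ℓ hℓ
      simp only [Finset.mem_Ico] at hℓ
      omega
    · intro k hk
      simp only [Finset.mem_range] at hk
      omega
    · intro ℓ _
      rfl
  rw [heq]
  exact geom_le hq (n - s)

lemma sum_min_sq {q A B : ℕ} (hq : 2 ≤ q) (n : ℕ) :
    (∑ ℓ ∈ Finset.range (n + 1), min (A * q ^ ℓ) (B * q ^ (n - ℓ))) ^ 2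
      ≤ 16 * (A * B * q ^ n) := by
  set S := ∑ ℓ ∈ Finset.range (n + 1), min (A * q ^ ℓ) (B * q ^ (n - ℓ)) with hS
  by_cases hex : ∃ ℓ, B * q ^ (n - ℓ) < A * q ^ ℓ ∧ ℓ ≤ n
  · set ℓ₀ := Nat.find hex with hℓ₀
    have hspec := Nat.find_spec hex
    have hR0 : B * q ^ (n - ℓ₀) < A * q ^ ℓ₀ := hspec.1
    have hl0n : ℓ₀ ≤ n := hspec.2
    have hsplit : S = (∑ ℓ ∈ Finset.range ℓ₀, min (A * q ^ ℓ) (B * q ^ (n - ℓ)))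
          + ∑ ℓ ∈ Finset.Ico ℓ₀ (n + 1), min (A * q ^ ℓ) (B * q ^ (n - ℓ)) := by
      rw [hS, Finset.range_eq_Ico, Finset.range_eq_Ico]
      exact (Finset.sum_Ico_consecutive (fun ℓ => min (A * q ^ ℓ) (B * q ^ (n - ℓ))) (Nat.zero_le _) (by omega : ℓ₀ ≤ n + 1)).symm
    have hS2 : (∑ ℓ ∈ Finset.Ico ℓ₀ (n + 1), min (A * q ^ ℓ) (B * q ^ (n - ℓ)))
        ≤ 2 * (B * q ^ (n - ℓ₀)) := by
      calc (∑ ℓ ∈ Finset.Ico ℓ₀ (n + 1), min (A * q ^ ℓ) (B * q ^ (n - ℓ)))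
          ≤ ∑ ℓ ∈ Finset.Ico ℓ₀ (n + 1), B * q ^ (n - ℓ) :=
            Finset.sum_le_sum fun ℓ _ => min_le_right _ _
        _ = B * ∑ ℓ ∈ Finset.Ico ℓ₀ (n + 1), q ^ (n - ℓ) := by rw [Finset.mul_sum]
        _ ≤ B * (2 * q ^ (n - ℓ₀)) := Nat.mul_le_mul_left _ (geom_le' hq hl0n)
        _ = 2 * (B * q ^ (n - ℓ₀)) := by ring
    set Y := B * q ^ (n - ℓ₀) with hY
    have hY2 : Y * Y ≤ A * B * q ^ n := by
      calc Y * Y ≤ (A * q ^ ℓ₀) * Y := Nat.mul_le_mul_right _ (le_of_lt hR0)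
        _ = A * B * (q ^ ℓ₀ * q ^ (n - ℓ₀)) := by rw [hY]; ring
        _ = A * B * q ^ n := by rw [← pow_add, Nat.add_sub_cancel' hl0n]
    rcases Nat.eq_zero_or_pos ℓ₀ with h0 | h0
    · have hzero : (∑ ℓ ∈ Finset.range ℓ₀, min (A * q ^ ℓ) (B * q ^ (n - ℓ))) = 0 := by
        rw [h0]; simp
      have hSle : S ≤ 2 * Y := by omega
      have hsq := Nat.pow_le_pow_left hSle 2
      nlinarith [hY2, hsq]
    · set X := A * q ^ (ℓ₀ - 1) with hX
      have hS1 : (∑ ℓ ∈ Finset.range ℓ₀, min (A * q ^ ℓ) (B * q ^ (n - ℓ))) ≤ 2 * X := by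
        calc (∑ ℓ ∈ Finset.range ℓ₀, min (A * q ^ ℓ) (B * q ^ (n - ℓ)))
            ≤ ∑ ℓ ∈ Finset.range ℓ₀, A * q ^ ℓ :=
              Finset.sum_le_sum fun ℓ _ => min_le_left _ _
          _ = A * ∑ ℓ ∈ Finset.range ℓ₀, q ^ ℓ := by rw [Finset.mul_sum]
          _ ≤ A * (2 * q ^ (ℓ₀ - 1)) := by
              have : ℓ₀ = (ℓ₀ - 1) + 1 := by omega
              rw [this]
              exact Nat.mul_le_mul_left _ (geom_le hq (ℓ₀ - 1))
          _ = 2 * X := by rw [hX]; ring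
      have hnot : ¬(B * q ^ (n - (ℓ₀ - 1)) < A * q ^ (ℓ₀ - 1) ∧ (ℓ₀ - 1) ≤ n) :=
        Nat.find_min hex (by omega)
      have hX1 : A * q ^ (ℓ₀ - 1) ≤ B * q ^ (n - (ℓ₀ - 1)) := by
        by_contra hcon
        exact hnot ⟨by omega, by omega⟩
      have hX2 : X * X ≤ A * B * q ^ n := by
        calc X * X ≤ (B * q ^ (n - (ℓ₀ - 1))) * X := Nat.mul_le_mul_right _ hX1
          _ = A * B * (q ^ (n - (ℓ₀ - 1)) * q ^ (ℓ₀ - 1)) := by rw [hX]; ring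
          _ = A * B * q ^ n := by rw [← pow_add, Nat.sub_add_cancel (by omega : ℓ₀ - 1 ≤ n)]
      have hSle : S ≤ 2 * X + 2 * Y := by
        rw [hsplit]
        omega
      have hXY : X * Y ≤ A * B * q ^ n := by
        have h1 : (X * Y) ^ 2 ≤ (A * B * q ^ n) ^ 2 := by
          calc (X * Y) ^ 2 = (X * X) * (Y * Y) := by ring
            _ ≤ (A * B * q ^ n) * (A * B * q ^ n) := Nat.mul_le_mul hX2 hY2
            _ = (A * B * q ^ n) ^ 2 := by ring
        exact (Nat.pow_le_pow_iff_left (by omega)).1 h1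
      have hsq := Nat.pow_le_pow_left hSle 2
      nlinarith [hX2, hY2, hXY, hsq]
  · push_neg at hex
    have hle : ∀ ℓ, ℓ ≤ n → A * q ^ ℓ ≤ B * q ^ (n - ℓ) := by
      intro ℓ hℓ
      by_contra hcon
      have := hex ℓ (by omega)
      omega
    have hmin : ∀ ℓ ∈ Finset.range (n + 1), min (A * q ^ ℓ) (B * q ^ (n - ℓ)) = A * q ^ ℓ := by
      intro ℓ hℓ
      simp only [Finset.mem_range] at hℓ
      exact min_eq_left (hle ℓ (by omega))
    have hSle : S ≤ 2 * (A * q ^ n) := by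
      rw [hS, Finset.sum_congr rfl hmin, ← Finset.mul_sum]
      calc A * ∑ ℓ ∈ Finset.range (n + 1), q ^ ℓ ≤ A * (2 * q ^ n) :=
            Nat.mul_le_mul_left _ (geom_le hq n)
        _ = 2 * (A * q ^ n) := by ring
    have h2 : A * q ^ n ≤ B := by simpa using hle n le_rfl
    have hsq := Nat.pow_le_pow_left hSle 2
    nlinarith [hsq, Nat.mul_le_mul_right (A * q ^ n) h2]

lemma card_univ_letters : (Finset.univ : Finset (α × Bool)).card = 2 * Fintype.card α := by
  rw [Finset.card_univ, Fintype.card_prod, Fintype.card_bool]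
  ring

lemma card_Wf_univ_le {q : ℕ} (hq : q + 1 = 2 * Fintype.card α) (t : ℕ) :
    (Wf t (Finset.univ : Finset (α × Bool))).card ≤ 2 * q ^ t := by
  cases t with
  | zero => rw [card_Wf_zero]; simp
  | succ t =>
    rw [card_Wf_succ, card_univ_letters, ← hq]
    have h1 : q + 1 ≤ 2 * q := by omega
    have h2 : q + 1 - 1 = q := by omega
    rw [h2]
    calc (q + 1) * q ^ t ≤ (2 * q) * q ^ t := Nat.mul_le_mul_right _ h1
      _ = 2 * q ^ (t + 1) := by rw [pow_succ]; ring

lemma card_Wf_univ_ge {q : ℕ} (hq : q + 1 = 2 * Fintype.card α) (t : ℕ) :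
    q ^ t ≤ (Wf t (Finset.univ : Finset (α × Bool))).card := by
  cases t with
  | zero => rw [card_Wf_zero]; simp
  | succ t =>
    rw [card_Wf_succ, card_univ_letters, ← hq]
    have h2 : q + 1 - 1 = q := by omega
    rw [h2, pow_succ, mul_comm (q ^ t) q]
    exact Nat.mul_le_mul_right _ (by omega)

lemma card_Pn_sq_le {q : ℕ} (hq : q + 1 = 2 * Fintype.card α) (hq2 : 2 ≤ q)
    (E F' : Finset (FreeGroup α)) (n : ℕ) :
    (Pn E F' n).card ^ 2 ≤ 64 * (E.card * F'.card * q ^ n) := by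
  have h1 : (Pn E F' n).card
      ≤ 2 * ∑ ℓ ∈ Finset.range (n + 1), min (F'.card * q ^ ℓ) (E.card * q ^ (n - ℓ)) := by
    calc (Pn E F' n).card ≤ ∑ ℓ ∈ Finset.range (n + 1), (Pnl E F' n ℓ).card :=
          card_Pn_le_sum E F' n
      _ ≤ ∑ ℓ ∈ Finset.range (n + 1), 2 * min (F'.card * q ^ ℓ) (E.card * q ^ (n - ℓ)) := by
          refine Finset.sum_le_sum fun ℓ _ => ?_
          have hL : (Pnl E F' n ℓ).card ≤ F'.card * (2 * q ^ ℓ) :=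
            (card_Pnl_le_left E F' n ℓ).trans
              (Nat.mul_le_mul_left _ (card_Wf_univ_le hq ℓ))
          have hR : (Pnl E F' n ℓ).card ≤ E.card * (2 * q ^ (n - ℓ)) :=
            (card_Pnl_le_right E F' n ℓ).trans
              (Nat.mul_le_mul_left _ (card_Wf_univ_le hq (n - ℓ)))
          have h1 : F'.card * (2 * q ^ ℓ) = 2 * (F'.card * q ^ ℓ) := by ring
          have h2 : E.card * (2 * q ^ (n - ℓ)) = 2 * (E.card * q ^ (n - ℓ)) := by ring
          rw [h1] at hL
          rw [h2] at hR
          rcases le_total (F'.card * q ^ ℓ) (E.card * q ^ (n - ℓ)) with h | h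
          · rw [min_eq_left h]; exact hL
          · rw [min_eq_right h]; exact hR
      _ = 2 * ∑ ℓ ∈ Finset.range (n + 1), min (F'.card * q ^ ℓ) (E.card * q ^ (n - ℓ)) := by
          rw [Finset.mul_sum]
  calc (Pn E F' n).card ^ 2
      ≤ (2 * ∑ ℓ ∈ Finset.range (n + 1), min (F'.card * q ^ ℓ) (E.card * q ^ (n - ℓ))) ^ 2 :=
        Nat.pow_le_pow_left h1 2
    _ = 4 * (∑ ℓ ∈ Finset.range (n + 1), min (F'.card * q ^ ℓ) (E.card * q ^ (n - ℓ))) ^ 2 := by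
        ring
    _ ≤ 4 * (16 * (F'.card * E.card * q ^ n)) :=
        Nat.mul_le_mul_left _ (sum_min_sq hq2 n)
    _ = 64 * (E.card * F'.card * q ^ n) := by ring


end Part4



namespace Part5
open RWT Part2 Part3 Part4 FreeGroup
set_option linter.unusedSectionVars false

variable {α : Type*} [DecidableEq α] [Fintype α]

lemma conv_apply (aa : ℕ → ℝ) (E : Finset (FreeGroup α)) (x : FreeGroup α) :
    conv (fun y => ENNReal.ofReal (aa (wlen y))) (finInd E) x
      = ∑ e ∈ E, ENNReal.ofReal (aa (wlen (x * e⁻¹))) := by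
  rw [conv,
    ← Equiv.tsum_eq ((Equiv.inv (FreeGroup α)).trans (Equiv.mulLeft x))
      (fun y => ENNReal.ofReal (aa (wlen y)) * finInd E (y⁻¹ * x))]
  have hterm : ∀ e : FreeGroup α,
      (fun y => ENNReal.ofReal (aa (wlen y)) * finInd E (y⁻¹ * x))
          (((Equiv.inv (FreeGroup α)).trans (Equiv.mulLeft x)) e)
        = ENNReal.ofReal (aa (wlen (x * e⁻¹))) * finInd E e := by
    intro e
    have h1 : ((Equiv.inv (FreeGroup α)).trans (Equiv.mulLeft x)) e = x * e⁻¹ := rfl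
    rw [h1]
    congr 2
    group
  rw [tsum_congr hterm]
  rw [tsum_eq_sum (s := E) (fun e he => by rw [finInd, if_neg he, mul_zero])]
  exact Finset.sum_congr rfl fun e he => by rw [finInd, if_pos he, mul_one]

lemma lhs_eq (aa : ℕ → ℝ) (E F' : Finset (FreeGroup α)) :
    (∑' x : FreeGroup α,
        conv (fun y => ENNReal.ofReal (aa (wlen y))) (finInd E) x * finInd F' x)
      = ∑ p ∈ F' ×ˢ E, ENNReal.ofReal (aa (wlen (p.1 * p.2⁻¹))) := by
  rw [tsum_congr (fun x => by rw [conv_apply aa E x] :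
    ∀ x : FreeGroup α, conv (fun y => ENNReal.ofReal (aa (wlen y))) (finInd E) x * finInd F' x
      = (∑ e ∈ E, ENNReal.ofReal (aa (wlen (x * e⁻¹)))) * finInd F' x)]
  rw [tsum_eq_sum (s := F') (fun x hx => by rw [finInd, if_neg hx, mul_zero])]
  rw [Finset.sum_product]
  exact Finset.sum_congr rfl fun x hx => by rw [finInd, if_pos hx, mul_one]

lemma sum_le_tsum_n (aa : ℕ → ℝ) (E F' : Finset (FreeGroup α)) :
    (∑ p ∈ F' ×ˢ E, ENNReal.ofReal (aa (wlen (p.1 * p.2⁻¹))))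
      ≤ ∑' n : ℕ, ENNReal.ofReal (aa n) * ((Pn E F' n).card : ℝ≥0∞) := by
  rw [Finset.sum_comp (fun n => ENNReal.ofReal (aa n))
    (fun p : FreeGroup α × FreeGroup α => wlen (p.1 * p.2⁻¹))]
  calc (∑ n ∈ (F' ×ˢ E).image (fun p => wlen (p.1 * p.2⁻¹)),
        ((F' ×ˢ E).filter (fun p => wlen (p.1 * p.2⁻¹) = n)).card • ENNReal.ofReal (aa n))
      = ∑ n ∈ (F' ×ˢ E).image (fun p => wlen (p.1 * p.2⁻¹)),
          ENNReal.ofReal (aa n) * ((Pn E F' n).card : ℝ≥0∞) := by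
        refine Finset.sum_congr rfl fun n _ => ?_
        rw [nsmul_eq_mul, mul_comm]
        rfl
    _ ≤ ∑' n : ℕ, ENNReal.ofReal (aa n) * ((Pn E F' n).card : ℝ≥0∞) :=
        ENNReal.sum_le_tsum _

lemma card_Pn_rpow_le {q : ℕ} (hq : q + 1 = 2 * Fintype.card α) (hq2 : 2 ≤ q)
    (E F' : Finset (FreeGroup α)) (n : ℕ) :
    ((Pn E F' n).card : ℝ≥0∞)
      ≤ 8 * ((E.card : ℝ≥0∞) ^ ((1:ℝ)/2) * (F'.card : ℝ≥0∞) ^ ((1:ℝ)/2)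
          * (q : ℝ≥0∞) ^ ((n:ℝ)/2)) := by
  have hnat := card_Pn_sq_le hq hq2 E F' n
  have hcast : ((Pn E F' n).card : ℝ≥0∞) ^ (2:ℕ)
      ≤ 64 * ((E.card : ℝ≥0∞) * (F'.card : ℝ≥0∞) * (q : ℝ≥0∞) ^ (n:ℕ)) := by
    calc ((Pn E F' n).card : ℝ≥0∞) ^ (2:ℕ)
        = (((Pn E F' n).card ^ 2 : ℕ) : ℝ≥0∞) := by push_cast; ring
      _ ≤ ((64 * (E.card * F'.card * q ^ n) : ℕ) : ℝ≥0∞) := Nat.cast_le.2 hnat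
      _ = 64 * ((E.card : ℝ≥0∞) * (F'.card : ℝ≥0∞) * (q : ℝ≥0∞) ^ (n:ℕ)) := by
          push_cast; ring
  have h1 : ((Pn E F' n).card : ℝ≥0∞)
      = (((Pn E F' n).card : ℝ≥0∞) ^ (2:ℕ)) ^ ((1:ℝ)/2) := by
    rw [← ENNReal.rpow_natCast _ 2, ← ENNReal.rpow_mul]
    norm_num
  rw [h1]
  refine le_trans (ENNReal.rpow_le_rpow hcast (by norm_num)) (le_of_eq ?_)
  rw [ENNReal.mul_rpow_of_nonneg _ _ (by norm_num : (0:ℝ) ≤ 1/2),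
    ENNReal.mul_rpow_of_nonneg _ _ (by norm_num : (0:ℝ) ≤ 1/2),
    ENNReal.mul_rpow_of_nonneg _ _ (by norm_num : (0:ℝ) ≤ 1/2)]
  have h64 : (64 : ℝ≥0∞) ^ ((1:ℝ)/2) = 8 := by
    rw [show (64:ℝ≥0∞) = (8:ℝ≥0∞)^(2:ℕ) by norm_num,
      ← ENNReal.rpow_natCast _ 2, ← ENNReal.rpow_mul]
    norm_num
  have hqn : ((q:ℝ≥0∞) ^ (n:ℕ)) ^ ((1:ℝ)/2) = (q:ℝ≥0∞) ^ ((n:ℝ)/2) := by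
    rw [← ENNReal.rpow_natCast _ n, ← ENNReal.rpow_mul]
    congr 1
    ring
  rw [h64, hqn]

end Part5



namespace Part6
open RWT Part2 Part3 Part4 FreeGroup
set_option linter.unusedSectionVars false

variable {α : Type*} [DecidableEq α] [Fintype α] [Nonempty α]

/-- Ball of radius `m` in the free group, as a finset. -/
def Bm (m : ℕ) : Finset (FreeGroup α) :=
  ((Finset.range (m+1)).biUnion
    (fun k => Wf k (Finset.univ : Finset (α × Bool)))).image FreeGroup.mk

lemma mem_Bm {m : ℕ} {x : FreeGroup α} (h : wlen x ≤ m) : x ∈ Bm m := by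
  refine Finset.mem_image.2 ⟨x.toWord, ?_, mk_toWord⟩
  refine Finset.mem_biUnion.2 ⟨wlen x, Finset.mem_range.2 (by omega), ?_⟩
  exact mem_Wf_of (reduced_toWord x) rfl (by simp)

lemma card_Bm_le {q : ℕ} (hq : q + 1 = 2 * Fintype.card α) (hq2 : 2 ≤ q) (m : ℕ) :
    (Bm (α := α) m).card ≤ 4 * q ^ m := by
  calc (Bm (α := α) m).card
      ≤ ((Finset.range (m+1)).biUnion
          (fun k => Wf k (Finset.univ : Finset (α × Bool)))).card := Finset.card_image_le
    _ ≤ ∑ k ∈ Finset.range (m+1), (Wf k (Finset.univ : Finset (α × Bool))).card :=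
        Finset.card_biUnion_le
    _ ≤ ∑ k ∈ Finset.range (m+1), 2 * q ^ k :=
        Finset.sum_le_sum fun k _ => card_Wf_univ_le hq k
    _ = 2 * ∑ k ∈ Finset.range (m+1), q ^ k := by rw [Finset.mul_sum]
    _ ≤ 2 * (2 * q ^ m) := Nat.mul_le_mul_left _ (geom_le hq2 m)
    _ = 4 * q ^ m := by ring

lemma invRev_eq_map_reverse (w : List (α × Bool)) :
    invRev w = (w.map flipL).reverse := rfl

lemma lower_pairs {q : ℕ} (hq : q + 1 = 2 * Fintype.card α) (hq2 : 2 ≤ q)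
    {m n : ℕ} (hnm : n ≤ m) :
    q ^ (m + n / 2) ≤ 2 * (Pn (Bm (α := α) m) (Bm (α := α) m) n).card := by
  classical
  set t := n / 2 with ht
  set ℓ := n - n / 2 with hℓ
  have htl : t ≤ ℓ := by omega
  have hlm : ℓ ≤ m := by omega
  have htln : t + ℓ = n := by omega
  set d₀ : α × Bool := (Classical.arbitrary α, true) with hd₀
  set A : List (α × Bool) → Finset (α × Bool) := fun ew =>
    Finset.univ \ insert ((ew.take ℓ).getLastD d₀) {flipL ((ew.drop ℓ).headD d₀)} with hA
  set Dom : Finset (Σ _ : List (α × Bool), List (α × Bool)) :=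
    (Wf m (Finset.univ : Finset (α × Bool))).sigma
      (fun ew => (Wf t (A ew)).image List.reverse) with hDom
  set ψ : (Σ _ : List (α × Bool), List (α × Bool)) → FreeGroup α × FreeGroup α :=
    fun s => (FreeGroup.mk (s.2 ++ s.1.drop ℓ), FreeGroup.mk s.1) with hψ
  -- facts about members of Dom
  have hmemfacts : ∀ s ∈ Dom, Reduced s.1 ∧ s.1.length = m ∧ Reduced s.2 ∧ s.2.length = t ∧
      (∀ p ∈ s.2.getLast?, p ∈ A s.1) := by
    rintro ⟨ew, u⟩ hs
    rw [hDom, Finset.mem_sigma] at hs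
    obtain ⟨hew, hu⟩ := hs
    obtain ⟨hred, hlen, -⟩ := mem_Wf hew
    obtain ⟨w', hw', rfl⟩ := Finset.mem_image.1 hu
    obtain ⟨hred', hlen', hhead'⟩ := mem_Wf hw'
    refine ⟨hred, hlen, ?_, by simpa using hlen', ?_⟩
    · rw [Reduced, show @List.Chain' = @List.IsChain from rfl, List.isChain_reverse]
      refine hred'.imp ?_
      intro a b hab he
      exact hab (by rw [he, flipL_flipL])
    · intro p hp
      rw [List.getLast?_reverse] at hp
      exact hhead' p hp
  have hredappend : ∀ s ∈ Dom, Reduced (s.2 ++ s.1.drop ℓ) := by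
    rintro ⟨ew, u⟩ hs
    obtain ⟨hredew, hlenew, hredu, hlenu, hlast⟩ := hmemfacts ⟨ew, u⟩ hs
    dsimp only at hredew hlenew hredu hlenu hlast ⊢
    have hredz : Reduced (ew.drop ℓ) := hredew.infix (ew.drop_suffix ℓ).isInfix
    refine List.isChain_append.2 ⟨hredu, hredz, ?_⟩
    intro p hp y hy
    have hpA := hlast p hp
    rw [hA] at hpA
    simp only [Finset.mem_sdiff, Finset.mem_univ, Finset.mem_insert,
      Finset.mem_singleton, true_and, not_or] at hpA
    have hyd : (ew.drop ℓ).headD d₀ = y := by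
      rw [List.headD_eq_head?_getD, Option.mem_def.1 hy]
      rfl
    intro hcon
    exact hpA.2 (by rw [hyd, hcon, flipL_flipL])
  -- membership of images in Pn
  have hmaps : ∀ s ∈ Dom, ψ s ∈ Pn (Bm (α := α) m) (Bm (α := α) m) n := by
    rintro ⟨ew, u⟩ hs
    obtain ⟨hredew, hlenew, hredu, hlenu, hlast⟩ := hmemfacts ⟨ew, u⟩ hs
    have hredxz := hredappend ⟨ew, u⟩ hs
    dsimp only at hredew hlenew hredu hlenu hlast hredxz
    set z := ew.drop ℓ with hz
    set w := ew.take ℓ with hw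
    have hredw : Reduced w := hredew.infix (ew.take_prefix ℓ).isInfix
    have hlenz : z.length = m - ℓ := by rw [hz, List.length_drop, hlenew]
    have hlenw : w.length = ℓ := by rw [hw, List.length_take, hlenew]; omega
    -- u ++ invRev w is reduced
    have hredxw : Reduced (u ++ invRev w) := by
      refine List.isChain_append.2 ⟨hredu, reduced_invRev hredw, ?_⟩
      intro p hp y hy
      have hpA := hlast p hp
      rw [hA] at hpA
      simp only [Finset.mem_sdiff, Finset.mem_univ, Finset.mem_insert,
        Finset.mem_singleton, true_and, not_or] at hpA
      rw [invRev_eq_map_reverse, List.head?_reverse, List.getLast?_map] at hy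
      obtain ⟨pw, hpw, rfl⟩ := Option.map_eq_some_iff.1 (Option.mem_def.1 hy)
      have hwd : w.getLastD d₀ = pw := by
        rw [List.getLastD_eq_getLast?, hpw]
        rfl
      intro hcon
      have hppw : pw = p := flipL_inj (by rw [hcon])
      exact hpA.1 (by rw [hwd, hppw])
    -- key algebra
    have hkey : FreeGroup.mk (u ++ z) * (FreeGroup.mk ew)⁻¹
        = FreeGroup.mk (u ++ invRev w) := by
      have hew : ew = w ++ z := by rw [hw, hz, List.take_append_drop]
      rw [hew, ← mul_mk, ← mul_mk]
      have hgp : FreeGroup.mk u * FreeGroup.mk z * (FreeGroup.mk w * FreeGroup.mk z)⁻¹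
          = FreeGroup.mk u * (FreeGroup.mk w)⁻¹ := by group
      rw [hgp, inv_mk, mul_mk]
    refine mem_Pn_iff.2 ⟨⟨?_, ?_⟩, ?_⟩
    · refine mem_Bm ?_
      rw [wlen]
      show (FreeGroup.mk (u ++ z)).toWord.length ≤ m
      rw [toWord_mk_reduced hredxz, List.length_append, hlenu, hlenz]
      omega
    · refine mem_Bm ?_
      rw [wlen]
      show (FreeGroup.mk ew).toWord.length ≤ m
      rw [toWord_mk_reduced hredew, hlenew]
    · show wlen (FreeGroup.mk (u ++ z) * (FreeGroup.mk ew)⁻¹) = n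
      rw [hkey, wlen, toWord_mk_reduced hredxw, List.length_append, invRev_length,
        hlenu, hlenw]
      omega
  -- injectivity
  have hinj : Set.InjOn ψ Dom := by
    rintro ⟨ew, u⟩ hs ⟨ew', u'⟩ hs' heq
    have hs0 : (⟨ew, u⟩ : Σ _ : List (α × Bool), List (α × Bool)) ∈ Dom := Finset.mem_coe.1 hs
    have hs0' : (⟨ew', u'⟩ : Σ _ : List (α × Bool), List (α × Bool)) ∈ Dom := Finset.mem_coe.1 hs'
    obtain ⟨hredew, hlenew, hredu, hlenu, -⟩ := hmemfacts ⟨ew, u⟩ hs0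
    obtain ⟨hredew', hlenew', hredu', hlenu', -⟩ := hmemfacts ⟨ew', u'⟩ hs0'
    have h1 := hredappend ⟨ew, u⟩ hs0
    have h2 := hredappend ⟨ew', u'⟩ hs0'
    dsimp only at hredew hlenew hredu hlenu hredew' hlenew' hredu' hlenu' h1 h2
    rw [hψ, Prod.mk.injEq] at heq
    dsimp only at heq
    obtain ⟨heq1, heq2⟩ := heq
    have hewew : ew = ew' := by
      have h := congrArg FreeGroup.toWord heq2
      rwa [toWord_mk_reduced hredew, toWord_mk_reduced hredew'] at h
    subst hewew
    have h := congrArg FreeGroup.toWord heq1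
    rw [toWord_mk_reduced h1, toWord_mk_reduced h2] at h
    have huu : u = u' := (List.append_inj h (by rw [hlenu, hlenu'])).1
    rw [huu]
  -- cardinality chain
  have hcard1 : Dom.card ≤ (Pn (Bm (α := α) m) (Bm (α := α) m) n).card :=
    Finset.card_le_card_of_injOn ψ hmaps hinj
  have hcard2 : Dom.card = ∑ ew ∈ Wf m (Finset.univ : Finset (α × Bool)), (Wf t (A ew)).card := by
    rw [hDom, Finset.card_sigma]
    exact Finset.sum_congr rfl fun ew _ =>
      Finset.card_image_of_injective _ List.reverse_injective
  have hper : ∀ ew ∈ Wf m (Finset.univ : Finset (α × Bool)),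
      q ^ t ≤ 2 * (Wf t (A ew)).card := by
    intro ew _
    cases t with
    | zero => rw [Part3.card_Wf_zero]; simp
    | succ t' =>
      rw [card_Wf_succ]
      have hqeq : 2 * Fintype.card α - 1 = q := by omega
      rw [hqeq]
      have cardA : q - 1 ≤ (A ew).card := by
        rw [hA]
        dsimp only
        rw [Finset.card_sdiff_of_subset (Finset.subset_univ _), card_univ_letters, ← hq]
        have hc : (insert ((ew.take ℓ).getLastD d₀) {flipL ((ew.drop ℓ).headD d₀)}
            : Finset (α × Bool)).card ≤ 2 := by
          refine (Finset.card_insert_le _ _).trans ?_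
          simp
        omega
      have h1 : q ≤ 2 * (q - 1) := by omega
      calc q ^ (t' + 1) = q ^ t' * q := pow_succ q t'
        _ ≤ q ^ t' * (2 * (q - 1)) := Nat.mul_le_mul_left _ h1
        _ = 2 * ((q - 1) * q ^ t') := by ring
        _ ≤ 2 * ((A ew).card * q ^ t') :=
            Nat.mul_le_mul_left _ (Nat.mul_le_mul_right _ cardA)
  calc q ^ (m + t) = q ^ m * q ^ t := pow_add q m t
    _ ≤ (Wf m (Finset.univ : Finset (α × Bool))).card * q ^ t :=
        Nat.mul_le_mul_right _ (card_Wf_univ_ge hq m)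
    _ = ∑ _ew ∈ Wf m (Finset.univ : Finset (α × Bool)), q ^ t := by
        rw [Finset.sum_const, smul_eq_mul]
    _ ≤ ∑ ew ∈ Wf m (Finset.univ : Finset (α × Bool)), 2 * (Wf t (A ew)).card :=
        Finset.sum_le_sum hper
    _ = 2 * ∑ ew ∈ Wf m (Finset.univ : Finset (α × Bool)), (Wf t (A ew)).card := by
        rw [Finset.mul_sum]
    _ = 2 * Dom.card := by rw [hcard2]
    _ ≤ 2 * (Pn (Bm (α := α) m) (Bm (α := α) m) n).card := Nat.mul_le_mul_left _ hcard1

end Part6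


/-- The radial convolution operator `λ(f)` with nonnegative coefficients `f_n` is of
restricted weak type `(2,2)`, i.e. `⟨f ∗ χ_E, χ_{F'}⟩ ≤ C |E|^{1/2} |F'|^{1/2}` for all
finite `E, F'`, if and only if `Σ_n f_n q^{n/2} < ∞` (i.e. `f ∈ L^{(2,1)}`). -/
theorem radial_restricted_weak_type_two_two_iff
    (r : ℕ) (hr : 2 ≤ r) (q : ℕ) (hq : q = 2 * r - 1)
    (a : ℕ → ℝ) (ha : ∀ n, 0 ≤ a n) :
    (∃ C : ℝ, ∀ E F' : Finset (FreeGroup (Fin r)),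
        ∑' x : FreeGroup (Fin r),
            conv (fun y => ENNReal.ofReal (a (wlen y))) (finInd E) x * finInd F' x
          ≤ ENNReal.ofReal C * (E.card : ℝ≥0∞) ^ ((1 : ℝ) / 2) *
              (F'.card : ℝ≥0∞) ^ ((1 : ℝ) / 2))
      ↔ (∑' n : ℕ, ENNReal.ofReal (a n) * (q : ℝ≥0∞) ^ ((n : ℝ) / 2)) ≠ ∞ := by
  haveI : Nonempty (Fin r) := ⟨⟨0, by omega⟩⟩
  have hq1 : q + 1 = 2 * Fintype.card (Fin r) := by
    rw [Fintype.card_fin]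
    omega
  have hq2 : (2 : ℕ) ≤ q := by omega
  have hone_le : (1 : ℝ≥0∞) ≤ (q : ℝ≥0∞) := by
    exact_mod_cast Nat.one_le_cast.2 (by omega : 1 ≤ q)
  constructor
  · -- restricted weak type implies summability
    rintro ⟨C, hC⟩
    -- partial-sum bound
    have hpart : ∀ m : ℕ,
        (∑ n ∈ Finset.range (m + 1),
            ENNReal.ofReal (a n) * (q : ℝ≥0∞) ^ ((n : ℝ) / 2))
          ≤ 8 * (q : ℝ≥0∞) * ENNReal.ofReal C := by
      intro m
      set Bmm := Part6.Bm (α := Fin r) m with hBmm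
      -- Step A : grouped sum is at most the full pair sum, which is at most the RWT bound
      have hA : (∑ n ∈ Finset.range (m + 1),
            ENNReal.ofReal (a n) * ((Part4.Pn Bmm Bmm n).card : ℝ≥0∞))
          ≤ ENNReal.ofReal C * (4 * (q : ℝ≥0∞) ^ (m : ℕ)) := by
        have hdisj : (↑(Finset.range (m + 1)) : Set ℕ).PairwiseDisjoint
            (fun n => Part4.Pn Bmm Bmm n) := by
          intro n _ n' _ hne
          exact Finset.disjoint_left.2 fun p hp hp' =>
            hne ((Part4.mem_Pn_iff.1 hp).2.symm.trans (Part4.mem_Pn_iff.1 hp').2)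
        calc (∑ n ∈ Finset.range (m + 1),
              ENNReal.ofReal (a n) * ((Part4.Pn Bmm Bmm n).card : ℝ≥0∞))
            = ∑ n ∈ Finset.range (m + 1), ∑ p ∈ Part4.Pn Bmm Bmm n,
                ENNReal.ofReal (a (wlen (p.1 * p.2⁻¹))) := by
              refine Finset.sum_congr rfl fun n _ => ?_
              rw [Finset.sum_congr rfl
                (fun p hp => by rw [(Part4.mem_Pn_iff.1 hp).2] :
                  ∀ p ∈ Part4.Pn Bmm Bmm n,
                    ENNReal.ofReal (a (wlen (p.1 * p.2⁻¹))) = ENNReal.ofReal (a n)),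
                Finset.sum_const, nsmul_eq_mul, mul_comm]
          _ = ∑ p ∈ (Finset.range (m + 1)).biUnion (fun n => Part4.Pn Bmm Bmm n),
                ENNReal.ofReal (a (wlen (p.1 * p.2⁻¹))) := (Finset.sum_biUnion hdisj).symm
          _ ≤ ∑ p ∈ Bmm ×ˢ Bmm, ENNReal.ofReal (a (wlen (p.1 * p.2⁻¹))) := by
              refine Finset.sum_le_sum_of_subset ?_
              refine Finset.biUnion_subset.2 fun n _ => ?_
              intro p hp
              exact Finset.mem_product.2 ⟨(Part4.mem_Pn_iff.1 hp).1.1,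
                (Part4.mem_Pn_iff.1 hp).1.2⟩
          _ = ∑' x : FreeGroup (Fin r),
                conv (fun y => ENNReal.ofReal (a (wlen y))) (finInd Bmm) x * finInd Bmm x :=
              (Part5.lhs_eq a Bmm Bmm).symm
          _ ≤ ENNReal.ofReal C * (Bmm.card : ℝ≥0∞) ^ ((1 : ℝ) / 2) *
                (Bmm.card : ℝ≥0∞) ^ ((1 : ℝ) / 2) := hC Bmm Bmm
          _ = ENNReal.ofReal C * (Bmm.card : ℝ≥0∞) := by
              rw [mul_assoc, ← ENNReal.rpow_add_of_nonneg _ _ (by norm_num) (by norm_num)]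
              norm_num
          _ ≤ ENNReal.ofReal C * (4 * (q : ℝ≥0∞) ^ (m : ℕ)) := by
              refine mul_le_mul_right ?_ _
              have := Part6.card_Bm_le (α := Fin r) hq1 hq2 m
              calc (Bmm.card : ℝ≥0∞) ≤ ((4 * q ^ m : ℕ) : ℝ≥0∞) := Nat.cast_le.2 this
                _ = 4 * (q : ℝ≥0∞) ^ (m : ℕ) := by push_cast; ring
      -- Step B : per-term lower bound
      have hB : ∀ n ∈ Finset.range (m + 1),
          ENNReal.ofReal (a n) * (q : ℝ≥0∞) ^ ((n : ℝ) / 2) * (q : ℝ≥0∞) ^ (m : ℕ)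
            ≤ 2 * (q : ℝ≥0∞) *
              (ENNReal.ofReal (a n) * ((Part4.Pn Bmm Bmm n).card : ℝ≥0∞)) := by
        intro n hn
        have hnm : n ≤ m := by
          simpa using Nat.lt_succ_iff.1 (Finset.mem_range.1 hn)
        have hlow := Part6.lower_pairs (α := Fin r) hq1 hq2 hnm
        have hlow' : ((q : ℝ≥0∞) ^ (m + n / 2 : ℕ))
            ≤ 2 * ((Part4.Pn Bmm Bmm n).card : ℝ≥0∞) := by
          calc ((q : ℝ≥0∞) ^ (m + n / 2 : ℕ)) = ((q ^ (m + n / 2) : ℕ) : ℝ≥0∞) := by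
                push_cast; ring
            _ ≤ ((2 * (Part4.Pn Bmm Bmm n).card : ℕ) : ℝ≥0∞) := Nat.cast_le.2 hlow
            _ = 2 * ((Part4.Pn Bmm Bmm n).card : ℝ≥0∞) := by push_cast; ring
        have hexp : (q : ℝ≥0∞) ^ ((n : ℝ) / 2) ≤ (q : ℝ≥0∞) ^ ((n / 2 + 1 : ℕ) : ℝ) := by
          refine ENNReal.rpow_le_rpow_of_exponent_le hone_le ?_
          have h2 : (n : ℝ) ≤ 2 * ((n / 2 : ℕ) : ℝ) + 2 := by
            exact_mod_cast (by omega : n ≤ 2 * (n / 2) + 2)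
          push_cast
          linarith
        calc ENNReal.ofReal (a n) * (q : ℝ≥0∞) ^ ((n : ℝ) / 2) * (q : ℝ≥0∞) ^ (m : ℕ)
            ≤ ENNReal.ofReal (a n) * (q : ℝ≥0∞) ^ ((n / 2 + 1 : ℕ) : ℝ) *
              (q : ℝ≥0∞) ^ (m : ℕ) := by
              exact mul_le_mul_left (mul_le_mul_right hexp _) _
          _ = ENNReal.ofReal (a n) * ((q : ℝ≥0∞) * (q : ℝ≥0∞) ^ (m + n / 2 : ℕ)) := by
              rw [ENNReal.rpow_natCast, mul_assoc, ← pow_add,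
                show n / 2 + 1 + m = (m + n / 2) + 1 by omega, pow_succ]
              ring
          _ ≤ ENNReal.ofReal (a n) *
                ((q : ℝ≥0∞) * (2 * ((Part4.Pn Bmm Bmm n).card : ℝ≥0∞))) := by
              exact mul_le_mul_right (mul_le_mul_right hlow' _) _
          _ = 2 * (q : ℝ≥0∞) *
                (ENNReal.ofReal (a n) * ((Part4.Pn Bmm Bmm n).card : ℝ≥0∞)) := by ring
      -- combine
      have hcomb : (∑ n ∈ Finset.range (m + 1),
            ENNReal.ofReal (a n) * (q : ℝ≥0∞) ^ ((n : ℝ) / 2)) * (q : ℝ≥0∞) ^ (m : ℕ)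
          ≤ (8 * (q : ℝ≥0∞) * ENNReal.ofReal C) * (q : ℝ≥0∞) ^ (m : ℕ) := by
        rw [Finset.sum_mul]
        calc (∑ n ∈ Finset.range (m + 1),
              ENNReal.ofReal (a n) * (q : ℝ≥0∞) ^ ((n : ℝ) / 2) * (q : ℝ≥0∞) ^ (m : ℕ))
            ≤ ∑ n ∈ Finset.range (m + 1), 2 * (q : ℝ≥0∞) *
                (ENNReal.ofReal (a n) * ((Part4.Pn Bmm Bmm n).card : ℝ≥0∞)) :=
              Finset.sum_le_sum hB
          _ = 2 * (q : ℝ≥0∞) * ∑ n ∈ Finset.range (m + 1),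
                ENNReal.ofReal (a n) * ((Part4.Pn Bmm Bmm n).card : ℝ≥0∞) := by
              rw [Finset.mul_sum]
          _ ≤ 2 * (q : ℝ≥0∞) * (ENNReal.ofReal C * (4 * (q : ℝ≥0∞) ^ (m : ℕ))) :=
              mul_le_mul_right hA _
          _ = (8 * (q : ℝ≥0∞) * ENNReal.ofReal C) * (q : ℝ≥0∞) ^ (m : ℕ) := by ring
      have hq0 : ((q : ℝ≥0∞) ^ (m : ℕ)) ≠ 0 := by
        refine pow_ne_zero _ ?_
        exact_mod_cast (by omega : q ≠ 0)
      have hqt : ((q : ℝ≥0∞) ^ (m : ℕ)) ≠ ∞ := by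
        exact ENNReal.pow_ne_top (ENNReal.natCast_ne_top q)
      exact (ENNReal.mul_le_mul_iff_left hq0 hqt).1 hcomb
    -- bound the tsum by the uniform partial-sum bound
    have hle : (∑' n : ℕ, ENNReal.ofReal (a n) * (q : ℝ≥0∞) ^ ((n : ℝ) / 2))
        ≤ 8 * (q : ℝ≥0∞) * ENNReal.ofReal C := by
      rw [ENNReal.tsum_eq_iSup_sum]
      refine iSup_le fun s => ?_
      obtain ⟨N, hN⟩ := s.exists_nat_subset_range
      refine le_trans (Finset.sum_le_sum_of_subset
        (hN.trans (Finset.range_subset_range.2 (by omega)))) (hpart N)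
    exact ne_top_of_le_ne_top
      (ENNReal.mul_ne_top
        (ENNReal.mul_ne_top (by simp) (ENNReal.natCast_ne_top q))
        ENNReal.ofReal_ne_top) hle
  · -- summability implies restricted weak type
    intro hS
    set S := ∑' n : ℕ, ENNReal.ofReal (a n) * (q : ℝ≥0∞) ^ ((n : ℝ) / 2) with hSdef
    refine ⟨((8 : ℝ≥0∞) * S).toReal, fun E F' => ?_⟩
    have hofC : ENNReal.ofReal (((8 : ℝ≥0∞) * S).toReal) = 8 * S :=
      ENNReal.ofReal_toReal (ENNReal.mul_ne_top (by simp) hS)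
    calc (∑' x : FreeGroup (Fin r),
          conv (fun y => ENNReal.ofReal (a (wlen y))) (finInd E) x * finInd F' x)
        = ∑ p ∈ F' ×ˢ E, ENNReal.ofReal (a (wlen (p.1 * p.2⁻¹))) := Part5.lhs_eq a E F'
      _ ≤ ∑' n : ℕ, ENNReal.ofReal (a n) * ((Part4.Pn E F' n).card : ℝ≥0∞) :=
          Part5.sum_le_tsum_n a E F'
      _ ≤ ∑' n : ℕ, ENNReal.ofReal (a n) *
            (8 * ((E.card : ℝ≥0∞) ^ ((1 : ℝ) / 2) * (F'.card : ℝ≥0∞) ^ ((1 : ℝ) / 2)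
              * (q : ℝ≥0∞) ^ ((n : ℝ) / 2))) :=
          ENNReal.tsum_le_tsum fun n =>
            mul_le_mul_right (Part5.card_Pn_rpow_le hq1 hq2 E F' n) _
      _ = ∑' n : ℕ, (8 * ((E.card : ℝ≥0∞) ^ ((1 : ℝ) / 2)
            * (F'.card : ℝ≥0∞) ^ ((1 : ℝ) / 2)))
            * (ENNReal.ofReal (a n) * (q : ℝ≥0∞) ^ ((n : ℝ) / 2)) := by
          refine tsum_congr fun n => ?_
          ring
      _ = (8 * ((E.card : ℝ≥0∞) ^ ((1 : ℝ) / 2) * (F'.card : ℝ≥0∞) ^ ((1 : ℝ) / 2))) * S :=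
          ENNReal.tsum_mul_left
      _ = ENNReal.ofReal (((8 : ℝ≥0∞) * S).toReal) * (E.card : ℝ≥0∞) ^ ((1 : ℝ) / 2) *
            (F'.card : ℝ≥0∞) ^ ((1 : ℝ) / 2) := by
          rw [hofC]
          ring
end
end

section
/- Let 1 < p < 2 and p′ = p/(p−1). For every radial function f = Σ_{n=0}^∞ f_n χ_n on the free group F with f_n ≥ 0 and for every n ∈ ℕ, one has Σ_{x∈F} ((f∗χ_n)(x))^{p′} ≥ q^n · Σ_{m=0}^{n} q^{m p′/p} f_m^{p′} (both sides understood as sums in [0,∞]). -/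
open scoped ENNReal

noncomputable section

/-- Indicator (ℝ≥0∞-valued) of the sphere of radius `n` in the free group. -/
def sphInd {α : Type*} [DecidableEq α] (n : ℕ) (x : FreeGroup α) : ℝ≥0∞ :=
  if wlen x = n then 1 else 0


namespace RadialAux


variable {α : Type*} [DecidableEq α]
set_option linter.unusedSectionVars false

/-- Non-cancellation relation on letters. -/
def NR (l1 l2 : α × Bool) : Prop := ¬(l1.1 = l2.1 ∧ l1.2 = !l2.2)

instance : DecidableRel (NR (α := α)) := fun _ _ => instDecidableNot

lemma reduce_eq_self {w : List (α × Bool)} (h : w.Chain' NR) :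
    FreeGroup.reduce w = w := by
  induction w with
  | nil => rfl
  | cons x L ih =>
    have hL : FreeGroup.reduce L = L := ih h.tail
    rw [FreeGroup.reduce.cons, hL]
    cases L with
    | nil => rfl
    | cons hd tl =>
      have hx : NR x hd := (List.isChain_cons_cons.mp h).1
      simp only [NR] at hx
      simp [hx]

lemma chain'_of_reduce_eq_self : ∀ {w : List (α × Bool)},
    FreeGroup.reduce w = w → w.Chain' NR := by
  intro w
  induction w with
  | nil => intro _; exact List.isChain_nil
  | cons x L ih =>
    intro h
    rw [FreeGroup.reduce.cons] at h
    rcases hL : FreeGroup.reduce L with _ | ⟨hd, tl⟩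
    · rw [hL] at h
      have h' : [x] = x :: L := h
      have : L = [] := by simpa using h'
      subst this; exact List.isChain_singleton _
    · rw [hL] at h
      have h : (if x.1 = hd.1 ∧ x.2 = !hd.2 then tl else x :: hd :: tl) = x :: L := h
      by_cases hc : x.1 = hd.1 ∧ x.2 = !hd.2
      · exfalso
        rw [if_pos hc] at h
        have hlen : tl.length ≤ L.length := by
          have := FreeGroup.Red.length_le (FreeGroup.reduce.red (L := L))
          rw [hL] at this
          simpa using Nat.le_of_succ_le this
        have : (x :: L).length = tl.length := by rw [h]
        simp at this
        omega
      · rw [if_neg hc] at h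
        have hLeq : L = hd :: tl := by
          have := congrArg List.tail h
          simpa using this.symm
        have hch : L.Chain' NR := ih (by rw [hL, hLeq])
        rw [hLeq] at hch ⊢
        exact List.isChain_cons_cons.mpr ⟨hc, hch⟩

lemma chain'_invRev {w : List (α × Bool)} (h : w.Chain' NR) :
    (FreeGroup.invRev w).Chain' NR := by
  unfold FreeGroup.invRev
  rw [List.Chain', List.isChain_reverse, List.isChain_map]
  refine (show List.IsChain NR w from h).imp ?_
  rintro a b hab ⟨h1, h2⟩
  exact hab ⟨h1.symm, by simp at h2; simp [h2]⟩

lemma getLast?_invRev (w : List (α × Bool)) :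
    (FreeGroup.invRev w).getLast? = w.head?.map (fun x => (x.1, !x.2)) := by
  simp [FreeGroup.invRev]

lemma reduce_concat {w v : List (α × Bool)} (hw : w.Chain' NR) (hv : v.Chain' NR)
    (hhd : ∀ l ∈ w.head?, ∀ l' ∈ v.head?, l ≠ l') :
    FreeGroup.reduce (FreeGroup.invRev w ++ v) = FreeGroup.invRev w ++ v := by
  apply reduce_eq_self
  rw [List.Chain', List.isChain_append]
  refine ⟨chain'_invRev hw, hv, ?_⟩
  intro x hx y hy
  rw [getLast?_invRev] at hx
  rcases Option.map_eq_some_iff.mp hx with ⟨l, hl, rfl⟩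
  rintro ⟨h1, h2⟩
  refine hhd l hl y hy ?_
  simp only at h1 h2
  have : l.2 = y.2 := by simpa using congrArg (!·) h2
  exact Prod.ext h1 this


/-- Finset of reduced words of length `m` whose first letter is not `b`. -/
def T (r : ℕ) : ℕ → (Fin r × Bool) → Finset (List (Fin r × Bool))
  | 0, _ => {[]}
  | m + 1, b =>
      (Finset.univ.filter (· ≠ b)).biUnion
        (fun c => (T r m (c.1, !c.2)).image (c :: ·))

lemma T_length {r : ℕ} : ∀ {m : ℕ} {b w}, w ∈ T r m b → w.length = m
  | 0, _, w, h => by simp only [T, Finset.mem_singleton] at h; subst h; rfl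
  | m + 1, b, w, h => by
      simp only [T, Finset.mem_biUnion, Finset.mem_image] at h
      obtain ⟨c, _, w', hw', rfl⟩ := h
      simp [T_length hw']

lemma T_head {r : ℕ} : ∀ {m : ℕ} {b w}, w ∈ T r m b → ∀ l ∈ w.head?, l ≠ b
  | 0, _, w, h => by
      simp only [T, Finset.mem_singleton] at h; subst h; simp
  | m + 1, b, w, h => by
      simp only [T, Finset.mem_biUnion, Finset.mem_image, Finset.mem_filter] at h
      obtain ⟨c, ⟨_, hc⟩, w', hw', rfl⟩ := h
      intro l hl
      simp only [List.head?_cons, Option.mem_def, Option.some.injEq] at hl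
      subst hl; exact hc

lemma T_chain {r : ℕ} : ∀ {m : ℕ} {b w}, w ∈ T r m b → w.Chain' NR
  | 0, _, w, h => by
      simp only [T, Finset.mem_singleton] at h; subst h; exact List.isChain_nil
  | m + 1, b, w, h => by
      simp only [T, Finset.mem_biUnion, Finset.mem_image] at h
      obtain ⟨c, _, w', hw', rfl⟩ := h
      refine List.isChain_cons.mpr ⟨?_, T_chain hw'⟩
      intro y hy
      rintro ⟨h1, h2⟩
      refine T_head hw' y hy ?_
      refine Prod.ext h1.symm ?_
      have := congrArg (!·) h2
      simpa using this.symm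

lemma T_card {r : ℕ} (hr : 2 ≤ r) : ∀ {m : ℕ} {b}, (2 * r - 1) ^ m ≤ (T r m b).card
  | 0, b => by simp [T]
  | m + 1, b => by
      have hdisj : ∀ c ∈ Finset.univ.filter (· ≠ b), ∀ c' ∈ Finset.univ.filter (· ≠ b),
          c ≠ c' → Disjoint ((T r m (c.1, !c.2)).image (c :: ·))
            ((T r m (c'.1, !c'.2)).image (c' :: ·)) := by
        intro c _ c' _ hne
        rw [Finset.disjoint_left]
        intro w hw hw'
        simp only [Finset.mem_image] at hw hw'
        obtain ⟨u, _, rfl⟩ := hw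
        obtain ⟨u', _, h⟩ := hw'
        exact hne (List.cons_eq_cons.mp h).1.symm
      rw [T, Finset.card_biUnion hdisj]
      have hcard : ∀ c : Fin r × Bool,
          ((T r m (c.1, !c.2)).image (c :: ·)).card = (T r m (c.1, !c.2)).card := by
        intro c
        exact Finset.card_image_of_injective _ (List.cons_injective)
      have hfil : (Finset.univ.filter (· ≠ b) : Finset (Fin r × Bool)).card = 2 * r - 1 := by
        rw [Finset.filter_ne', Finset.card_erase_of_mem (Finset.mem_univ _)]
        simp [Fintype.card_prod]
        omega
      calc (2 * r - 1) ^ (m + 1) = (2 * r - 1) * (2 * r - 1) ^ m := by ring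
        _ ≤ ∑ c ∈ Finset.univ.filter (· ≠ b), (2 * r - 1) ^ m := by
            rw [Finset.sum_const, hfil, smul_eq_mul]
        _ ≤ _ := Finset.sum_le_sum (fun c _ => by rw [hcard]; exact T_card hr)


lemma toWord_mk_T {r m : ℕ} {b} {w : List (Fin r × Bool)} (hw : w ∈ T r m b) :
    (FreeGroup.mk w).toWord = w := by
  rw [FreeGroup.toWord_mk]; exact reduce_eq_self (T_chain hw)

lemma wlen_mk_T {r m : ℕ} {b} {w : List (Fin r × Bool)} (hw : w ∈ T r m b) :
    wlen (FreeGroup.mk w) = m := by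
  rw [wlen, toWord_mk_T hw]; exact T_length hw

lemma wlen_inv_mul {r m : ℕ} {b} {w : List (Fin r × Bool)} (x : FreeGroup (Fin r))
    (hw : w ∈ T r m b) (hb : ∀ l' ∈ x.toWord.head?, b = l') :
    wlen ((FreeGroup.mk w)⁻¹ * x) = m + wlen x := by
  conv_lhs => rw [← FreeGroup.mk_toWord (x := x)]
  rw [FreeGroup.inv_mk, FreeGroup.mul_mk, wlen, FreeGroup.toWord_mk]
  rw [reduce_concat (T_chain hw) (chain'_of_reduce_eq_self (FreeGroup.reduce_toWord x))
    (fun l hl l' hl' => by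
      have h1 := T_head hw l hl
      rw [hb l' hl'] at h1
      exact h1)]
  simp [FreeGroup.invRev_length, T_length hw, wlen]

lemma conv_lower {r : ℕ} (hr : 2 ≤ r) (a : ℕ → ℝ) {n m : ℕ} (hm : m ≤ n)
    (x : FreeGroup (Fin r)) (hx : wlen x = n - m) :
    ((2 * r - 1 : ℕ) : ℝ≥0∞) ^ m * ENNReal.ofReal (a m)
      ≤ conv (fun y => ENNReal.ofReal (a (wlen y))) (sphInd n) x := by
  have hr0 : 0 < r := by omega
  set b : Fin r × Bool := x.toWord.head?.getD (⟨0, hr0⟩, true) with hbdef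
  have hinj : Set.InjOn FreeGroup.mk (T r m b : Set (List (Fin r × Bool))) := by
    intro w hw w' hw' h
    rw [← toWord_mk_T hw, ← toWord_mk_T hw', h]
  set C : Finset (FreeGroup (Fin r)) := (T r m b).image FreeGroup.mk with hC
  have hcard : (2 * r - 1) ^ m ≤ C.card := by
    rw [hC, Finset.card_image_of_injOn hinj]; exact T_card hr
  have hterm : ∀ y ∈ C,
      (fun y => ENNReal.ofReal (a (wlen y))) y * sphInd n (y⁻¹ * x)
        = ENNReal.ofReal (a m) := by
    intro y hy
    obtain ⟨w, hw, rfl⟩ := Finset.mem_image.mp hy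
    have h1 : wlen (FreeGroup.mk w) = m := wlen_mk_T hw
    have hbl : ∀ l' ∈ x.toWord.head?, b = l' := by
      intro l' hl'
      rw [hbdef, Option.mem_def.mp hl']
      rfl
    have h2 : wlen ((FreeGroup.mk w)⁻¹ * x) = n := by
      rw [wlen_inv_mul x hw hbl, hx]; omega
    show ENNReal.ofReal (a (wlen (FreeGroup.mk w))) * sphInd n ((FreeGroup.mk w)⁻¹ * x)
      = ENNReal.ofReal (a m)
    rw [h1, sphInd, if_pos h2, mul_one]
  calc ((2 * r - 1 : ℕ) : ℝ≥0∞) ^ m * ENNReal.ofReal (a m)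
      ≤ (C.card : ℝ≥0∞) * ENNReal.ofReal (a m) := by
        have h := (Nat.cast_le (α := ℝ≥0∞)).mpr hcard
        rw [Nat.cast_pow] at h
        exact mul_le_mul_left h _
    _ = ∑ y ∈ C, (fun y => ENNReal.ofReal (a (wlen y))) y * sphInd n (y⁻¹ * x) := by
        rw [Finset.sum_congr rfl hterm, Finset.sum_const, nsmul_eq_mul]
    _ ≤ conv (fun y => ENNReal.ofReal (a (wlen y))) (sphInd n) x :=
        ENNReal.sum_le_tsum C

end RadialAux

open RadialAux in
/-- For `1 < p < 2`, `p' = p/(p-1)`, a nonnegative radial function `f = Σ f_k χ_k` and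
every `n`, one has `Σ_x ((f ∗ χ_n)(x))^{p'} ≥ q^n Σ_{m=0}^n q^{m p'/p} f_m^{p'}`. -/
theorem radial_conv_sphere_lower_lp
    (r : ℕ) (hr : 2 ≤ r) (q : ℕ) (hq : q = 2 * r - 1)
    (p : ℝ) (hp1 : 1 < p) (hp2 : p < 2) (p' : ℝ) (hp' : p' = p / (p - 1))
    (a : ℕ → ℝ) (ha : ∀ k, 0 ≤ a k) (n : ℕ) :
    (q : ℝ≥0∞) ^ n *
        ∑ m ∈ Finset.range (n + 1),
          (q : ℝ≥0∞) ^ ((m : ℝ) * p' / p) * ENNReal.ofReal (a m) ^ p'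
      ≤ ∑' x : FreeGroup (Fin r),
          (conv (fun y => ENNReal.ofReal (a (wlen y))) (sphInd n) x) ^ p' := by
  subst hq
  have hr0 : 0 < r := by omega
  set Q : ℝ≥0∞ := ((2 * r - 1 : ℕ) : ℝ≥0∞) with hQ
  have hQ0 : Q ≠ 0 := by
    simp only [hQ, ne_eq, Nat.cast_eq_zero]
    omega
  have hQtop : Q ≠ ⊤ := by rw [hQ]; exact ENNReal.natCast_ne_top _
  have hp0 : p ≠ 0 := by linarith
  have hpm1 : p - 1 ≠ 0 := by intro h; nlinarith [h]
  have hp'pos : 0 ≤ p' := by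
    rw [hp']
    apply div_nonneg <;> nlinarith
  set b0 : Fin r × Bool := (⟨0, hr0⟩, true) with hb0
  set B : ℕ → Finset (FreeGroup (Fin r)) :=
    fun m => (T r (n - m) b0).image FreeGroup.mk with hB
  have hwlenB : ∀ m, ∀ x ∈ B m, wlen x = n - m := by
    intro m x hx
    obtain ⟨w, hw, rfl⟩ := Finset.mem_image.mp hx
    exact wlen_mk_T hw
  have hcardB : ∀ m, (2 * r - 1) ^ (n - m) ≤ (B m).card := by
    intro m
    have hinj : Set.InjOn FreeGroup.mk (T r (n - m) b0 : Set (List (Fin r × Bool))) := by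
      intro w hw w' hw' h
      rw [← toWord_mk_T hw, ← toWord_mk_T hw', h]
    rw [hB]
    simp only
    rw [Finset.card_image_of_injOn hinj]
    exact T_card hr
  have hdisj : ∀ m ∈ Finset.range (n + 1), ∀ m' ∈ Finset.range (n + 1),
      m ≠ m' → Disjoint (B m) (B m') := by
    intro m hm m' hm' hne
    rw [Finset.disjoint_left]
    intro x hx hx'
    have e1 := hwlenB m x hx
    have e2 := hwlenB m' x hx'
    simp only [Finset.mem_range] at hm hm'
    omega
  have hexp : ∀ m : ℕ, m ≤ n →
      (n : ℝ) + (m : ℝ) * p' / p = ((n - m : ℕ) : ℝ) + (m : ℝ) * p' := by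
    intro m hm
    rw [Nat.cast_sub hm, hp']
    field_simp
    ring
  have key : ∀ m : ℕ, m ≤ n →
      Q ^ n * (Q ^ ((m : ℝ) * p' / p) * ENNReal.ofReal (a m) ^ p')
        = Q ^ (n - m) * ((Q ^ m * ENNReal.ofReal (a m)) ^ p') := by
    intro m hm
    rw [ENNReal.mul_rpow_of_nonneg _ _ hp'pos]
    rw [← ENNReal.rpow_natCast Q m, ← ENNReal.rpow_natCast Q n,
      ← ENNReal.rpow_natCast Q (n - m), ← ENNReal.rpow_mul]
    rw [← mul_assoc, ← mul_assoc, ← ENNReal.rpow_add _ _ hQ0 hQtop,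
      ← ENNReal.rpow_add _ _ hQ0 hQtop, hexp m hm]
  calc Q ^ n * ∑ m ∈ Finset.range (n + 1),
        Q ^ ((m : ℝ) * p' / p) * ENNReal.ofReal (a m) ^ p'
      = ∑ m ∈ Finset.range (n + 1),
          Q ^ n * (Q ^ ((m : ℝ) * p' / p) * ENNReal.ofReal (a m) ^ p') :=
        Finset.mul_sum _ _ _
    _ ≤ ∑ m ∈ Finset.range (n + 1), ∑ x ∈ B m,
          (conv (fun y => ENNReal.ofReal (a (wlen y))) (sphInd n) x) ^ p' := by
        refine Finset.sum_le_sum ?_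
        intro m hmr
        have hm : m ≤ n := by
          simp only [Finset.mem_range] at hmr; omega
        rw [key m hm]
        calc Q ^ (n - m) * ((Q ^ m * ENNReal.ofReal (a m)) ^ p')
            ≤ ((B m).card : ℝ≥0∞) * ((Q ^ m * ENNReal.ofReal (a m)) ^ p') := by
              have h := (Nat.cast_le (α := ℝ≥0∞)).mpr (hcardB m)
              rw [Nat.cast_pow] at h
              exact mul_le_mul_left h _
          _ = ∑ _x ∈ B m, (Q ^ m * ENNReal.ofReal (a m)) ^ p' := by
              rw [Finset.sum_const, nsmul_eq_mul]
          _ ≤ ∑ x ∈ B m,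
                (conv (fun y => ENNReal.ofReal (a (wlen y))) (sphInd n) x) ^ p' := by
              refine Finset.sum_le_sum ?_
              intro x hx
              exact ENNReal.rpow_le_rpow
                (conv_lower hr a hm x (hwlenB m x hx)) hp'pos
    _ = ∑ x ∈ (Finset.range (n + 1)).biUnion B,
          (conv (fun y => ENNReal.ofReal (a (wlen y))) (sphInd n) x) ^ p' :=
        (Finset.sum_biUnion hdisj).symm
    _ ≤ ∑' x : FreeGroup (Fin r),
          (conv (fun y => ENNReal.ofReal (a (wlen y))) (sphInd n) x) ^ p' :=
        ENNReal.sum_le_tsum _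
end
end
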